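/- The univariate zero-inflated Poisson-lognormal model with parameter θ = (μ, σ², π) ∈ ℝ × (0,∞) × (0,1) is identifiable: if two parameter values give the same distribution of Y, then they are equal. -/

import Mathlib

open ProbabilityTheory MeasureTheory
open scoped NNReal
open scoped Nat

/-- The pmf of the univariate zero-inflated Poisson-lognormal distribution:
`Z ~ N(μ, v)`, `W ~ Bernoulli(π)` independent of `Z`, and
`Y | W, Z ~ W·δ₀ + (1-W)·Poisson(e^Z)`. -/
noncomputable def ziplnPMF (μ : ℝ) (v : ℝ≥0) (p : ℝ) (k : ℕ) : ℝ :=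
  p * (if k = 0 then 1 else 0) +
    (1 - p) * ∫ z, poissonPMFReal (Real.exp z).toNNReal k ∂(gaussianReal μ v)

lemma zipln_exp_key (μ : ℝ) (v : ℝ≥0) (hv : v ≠ 0) (t z : ℝ) :
    gaussianPDFReal μ v z * Real.exp (t * z)
      = Real.exp (t * μ + t ^ 2 * v / 2) * gaussianPDFReal (μ + t * v) v z := by
  have hv' : (v : ℝ) ≠ 0 := by exact_mod_cast hv
  have hv0 : (0:ℝ) < v := lt_of_le_of_ne v.coe_nonneg (Ne.symm hv')
  have hexp : -(z - μ) ^ 2 / (2 * (v:ℝ)) + t * z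
      = t * μ + t ^ 2 * (v:ℝ) / 2 + -(z - (μ + t * (v:ℝ))) ^ 2 / (2 * (v:ℝ)) := by
    field_simp
    ring
  simp only [gaussianPDFReal]
  rw [mul_assoc, ← Real.exp_add, hexp, Real.exp_add]
  ring

lemma zipln_lintegral_exp_gaussian (μ : ℝ) {v : ℝ≥0} (hv : v ≠ 0) (t : ℝ) :
    ∫⁻ z, ENNReal.ofReal (Real.exp (t * z)) ∂(gaussianReal μ v)
      = ENNReal.ofReal (Real.exp (t * μ + t ^ 2 * v / 2)) := by
  rw [gaussianReal_of_var_ne_zero μ hv,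
    lintegral_withDensity_eq_lintegral_mul _ (measurable_gaussianPDF μ v) ((measurable_id'.const_mul t).exp.ennreal_ofReal)]
  have hpt : ∀ z : ℝ, (gaussianPDF μ v * fun z => ENNReal.ofReal (Real.exp (t * z))) z
      = ENNReal.ofReal (Real.exp (t * μ + t ^ 2 * v / 2)) * gaussianPDF (μ + t * v) v z := by
    intro z
    simp only [Pi.mul_apply, gaussianPDF]
    rw [← ENNReal.ofReal_mul (gaussianPDFReal_nonneg _ _ _), zipln_exp_key μ v hv t z,
      ENNReal.ofReal_mul (Real.exp_nonneg _)]
  simp_rw [hpt]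
  rw [lintegral_const_mul _ (measurable_gaussianPDF _ v), lintegral_gaussianPDF_eq_one _ hv,
    mul_one]

lemma zipln_bound (n : ℕ) (z : ℝ) : (n : ℝ) * z - Real.exp z ≤ (n : ℝ) ^ 2 := by
  rcases le_or_gt z 0 with hz | hz
  · have h1 : (n : ℝ) * z ≤ 0 := mul_nonpos_of_nonneg_of_nonpos (Nat.cast_nonneg n) hz
    have := Real.exp_pos z
    nlinarith
  · have h1 : z / 2 + 1 ≤ Real.exp (z / 2) := Real.add_one_le_exp _
    have h2 : Real.exp z = Real.exp (z / 2) * Real.exp (z / 2) := by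
      rw [← Real.exp_add]; ring_nf
    nlinarith [sq_nonneg (z / 2 - (n : ℝ)), Real.exp_pos (z / 2)]

lemma zipln_integrable (n : ℕ) (ν : Measure ℝ) [IsProbabilityMeasure ν] :
    Integrable (fun z => Real.exp ((n : ℝ) * z - Real.exp z)) ν := by
  refine Integrable.mono' (integrable_const (Real.exp ((n : ℝ) ^ 2))) (((measurable_id'.const_mul _).sub Real.measurable_exp).exp.aestronglyMeasurable) ?_
  filter_upwards with z
  rw [Real.norm_eq_abs, abs_of_nonneg (Real.exp_nonneg _)]
  exact Real.exp_le_exp.mpr (zipln_bound n z)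

lemma zipln_hasSum (k : ℕ) (z : ℝ) :
    HasSum (fun j : ℕ => Real.exp ((↑(k + j) : ℝ) * z - Real.exp z) * ((j ! : ℝ))⁻¹)
      (Real.exp ((k : ℝ) * z)) := by
  have h : HasSum (fun j : ℕ => (Real.exp z) ^ j / j !) (Real.exp (Real.exp z)) := by
    have h0 := NormedSpace.expSeries_div_hasSum_exp (Real.exp z)
    rwa [← Real.exp_eq_exp_ℝ] at h0
  have h2 := h.mul_left (Real.exp ((k : ℝ) * z - Real.exp z))
  have e1 : Real.exp ((k : ℝ) * z - Real.exp z) * Real.exp (Real.exp z)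
      = Real.exp ((k : ℝ) * z) := by
    rw [← Real.exp_add]; ring_nf
  rw [e1] at h2
  convert h2 using 2 with j
  · rfl
  rw [div_eq_mul_inv, ← mul_assoc, ← Real.exp_nat_mul, ← Real.exp_add]
  push_cast
  ring_nf

lemma zipln_step_sum (μ : ℝ) {v : ℝ≥0} (hv : v ≠ 0) (k : ℕ) :
    ENNReal.ofReal (Real.exp ((k : ℝ) * μ + (k : ℝ) ^ 2 * v / 2))
      = ∑' j : ℕ,
          (∫⁻ z, ENNReal.ofReal (Real.exp ((↑(k + j) : ℝ) * z - Real.exp z))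
              ∂(gaussianReal μ v)) * ENNReal.ofReal ((j ! : ℝ))⁻¹ := by
  rw [← zipln_lintegral_exp_gaussian μ hv (k : ℝ)]
  have hpt : ∀ z : ℝ, ENNReal.ofReal (Real.exp ((k : ℝ) * z))
      = ∑' j : ℕ, ENNReal.ofReal
          (Real.exp ((↑(k + j) : ℝ) * z - Real.exp z) * ((j ! : ℝ))⁻¹) := by
    intro z
    have hs := zipln_hasSum k z
    rw [← hs.tsum_eq, ENNReal.ofReal_tsum_of_nonneg (fun j => by positivity) hs.summable]
  simp_rw [hpt]
  rw [lintegral_tsum (fun j => by fun_prop)]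
  congr 1
  funext j
  simp_rw [ENNReal.ofReal_mul (Real.exp_nonneg _)]
  rw [lintegral_mul_const' _ _ ENNReal.ofReal_ne_top]

/-- Identifiability of the univariate zero-inflated Poisson-lognormal model with
parameter `θ = (μ, σ², π) ∈ ℝ × (0,∞) × (0,1)`: if two parameter values give the
same distribution of `Y`, then they are equal. -/
theorem zipln_identifiable (μ₁ μ₂ : ℝ) (v₁ v₂ : ℝ≥0) (p₁ p₂ : ℝ)
    (hv₁ : 0 < v₁) (hv₂ : 0 < v₂)
    (hp₁ : p₁ ∈ Set.Ioo (0:ℝ) 1) (hp₂ : p₂ ∈ Set.Ioo (0:ℝ) 1)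
    (h : ∀ k : ℕ, ziplnPMF μ₁ v₁ p₁ k = ziplnPMF μ₂ v₂ p₂ k) :
    μ₁ = μ₂ ∧ v₁ = v₂ ∧ p₁ = p₂ := by
  obtain ⟨hp₁0, hp₁1⟩ := hp₁
  obtain ⟨hp₂0, hp₂1⟩ := hp₂
  have hc₁ : (0:ℝ) < 1 - p₁ := by linarith
  have hc₂ : (0:ℝ) < 1 - p₂ := by linarith
  -- Step A : equality of tilted integrals
  have key : ∀ n : ℕ, n ≠ 0 →
      ENNReal.ofReal (1 - p₁) *
          ∫⁻ z, ENNReal.ofReal (Real.exp ((n : ℝ) * z - Real.exp z)) ∂(gaussianReal μ₁ v₁)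
        = ENNReal.ofReal (1 - p₂) *
          ∫⁻ z, ENNReal.ofReal (Real.exp ((n : ℝ) * z - Real.exp z)) ∂(gaussianReal μ₂ v₂) := by
    intro n hn
    have hh := h n
    have hpmf : ∀ z : ℝ, poissonPMFReal (Real.exp z).toNNReal n
        = Real.exp ((n : ℝ) * z - Real.exp z) / n ! := by
      intro z
      unfold poissonPMFReal
      rw [Real.coe_toNNReal _ (Real.exp_nonneg z)]
      rw [← Real.exp_nat_mul, ← Real.exp_add]
      ring_nf
    simp only [ziplnPMF, if_neg hn, mul_zero, zero_add] at hh
    simp_rw [hpmf, integral_div] at hh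
    have hn' : (n ! : ℝ) ≠ 0 := Nat.cast_ne_zero.mpr (Nat.factorial_ne_zero n)
    have hh' : (1 - p₁) * ∫ z, Real.exp ((n : ℝ) * z - Real.exp z) ∂(gaussianReal μ₁ v₁)
        = (1 - p₂) * ∫ z, Real.exp ((n : ℝ) * z - Real.exp z) ∂(gaussianReal μ₂ v₂) := by
      field_simp at hh
      linarith
    rw [← MeasureTheory.ofReal_integral_eq_lintegral_ofReal (zipln_integrable n _)
        (Filter.Eventually.of_forall fun z => Real.exp_nonneg _),
      ← MeasureTheory.ofReal_integral_eq_lintegral_ofReal (zipln_integrable n _)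
        (Filter.Eventually.of_forall fun z => Real.exp_nonneg _),
      ← ENNReal.ofReal_mul hc₁.le, ← ENNReal.ofReal_mul hc₂.le, hh']
  -- Step B : mgf equality
  have key2 : ∀ k : ℕ, k ≠ 0 →
      (1 - p₁) * Real.exp ((k : ℝ) * μ₁ + (k : ℝ) ^ 2 * v₁ / 2)
        = (1 - p₂) * Real.exp ((k : ℝ) * μ₂ + (k : ℝ) ^ 2 * v₂ / 2) := by
    intro k hk
    have comb : ENNReal.ofReal (1 - p₁) *
          ENNReal.ofReal (Real.exp ((k : ℝ) * μ₁ + (k : ℝ) ^ 2 * v₁ / 2))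
        = ENNReal.ofReal (1 - p₂) *
          ENNReal.ofReal (Real.exp ((k : ℝ) * μ₂ + (k : ℝ) ^ 2 * v₂ / 2)) := by
      rw [zipln_step_sum μ₁ hv₁.ne' k, zipln_step_sum μ₂ hv₂.ne' k,
        ← ENNReal.tsum_mul_left, ← ENNReal.tsum_mul_left]
      refine tsum_congr fun j => ?_
      rw [← mul_assoc, ← mul_assoc, key (k + j) (by omega)]
    rw [← ENNReal.ofReal_mul hc₁.le, ← ENNReal.ofReal_mul hc₂.le] at comb
    rw [ENNReal.ofReal_eq_ofReal_iff (by positivity) (by positivity)] at comb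
    exact comb
  have E : ∀ k : ℕ, k ≠ 0 →
      Real.log (1 - p₁) + ((k : ℝ) * μ₁ + (k : ℝ) ^ 2 * v₁ / 2)
        = Real.log (1 - p₂) + ((k : ℝ) * μ₂ + (k : ℝ) ^ 2 * v₂ / 2) := by
    intro k hk
    have h' := congrArg Real.log (key2 k hk)
    rwa [Real.log_mul hc₁.ne' (Real.exp_ne_zero _),
      Real.log_mul hc₂.ne' (Real.exp_ne_zero _), Real.log_exp, Real.log_exp] at h'
  have E1 := E 1 one_ne_zero
  have E2 := E 2 two_ne_zero
  have E3 := E 3 three_ne_zero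
  norm_num at E1 E2 E3
  have hveq : (v₁ : ℝ) = v₂ := by linarith
  have hμeq : μ₁ = μ₂ := by linarith
  have hlog : Real.log (1 - p₁) = Real.log (1 - p₂) := by linarith
  refine ⟨hμeq, NNReal.coe_injective hveq, ?_⟩
  have h'' := congrArg Real.exp hlog
  rw [Real.exp_log hc₁, Real.exp_log hc₂] at h''
  linarith
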